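/- arXiv:1608.08086 — 3 statements merged into one kernel-verified Lean document; each statement's English description precedes it below -/
import Mathlib

section
/- For every real x ≥ 3, one has ∏_{p prime, p ≤ x} (1 − 1/p) > 0.09 / log x. -/
open Finset Real

namespace M009

/-! Numeric exp helpers -/

lemma exp_le_aux {x : ℝ} (h0 : 0 ≤ x) (h1 : x < 1) : Real.exp x ≤ (1 - x)⁻¹ := by
  have h2 : 1 - x ≤ Real.exp (-x) := by have := Real.add_one_le_exp (-x); linarith
  rw [Real.exp_neg] at h2
  have hx : 0 < 1 - x := by linarith
  have he : 0 < Real.exp x := Real.exp_pos x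
  have hmul : (1 - x) * Real.exp x ≤ 1 := by
    have := mul_le_mul_of_nonneg_right h2 he.le
    rwa [inv_mul_cancel₀ (ne_of_gt he)] at this
  nlinarith [mul_inv_cancel₀ (ne_of_gt hx), inv_pos.mpr hx]

lemma exp_upper (c B : ℝ) (n : ℕ) (hn : 0 < n) (h0 : 0 ≤ c) (h2 : c / n < 1)
    (h : 1 ≤ B * (1 - c / n) ^ n) : Real.exp c ≤ B := by
  have hd : (0:ℝ) < 1 - c / n := by linarith
  have hdn : 0 < (1 - c / n) ^ n := pow_pos hd n
  have h3 : Real.exp c = (Real.exp (c / n)) ^ n := by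
    rw [← Real.exp_nat_mul]
    congr 1
    field_simp
  have h4 : (Real.exp (c / n)) ^ n ≤ ((1 - c / n)⁻¹) ^ n := by
    apply pow_le_pow_left₀ (Real.exp_pos _).le
    exact exp_le_aux (by positivity) h2
  have h5 : ((1 - c / n)⁻¹) ^ n = ((1 - c / n) ^ n)⁻¹ := inv_pow _ n
  have h6 : ((1 - c / n) ^ n)⁻¹ ≤ B := by
    nlinarith [mul_inv_cancel₀ (ne_of_gt hdn), inv_pos.mpr hdn]
  rw [h3]; rw [h5] at h4; linarith

lemma exp_lower (c B : ℝ) (n : ℕ) (h0 : 0 ≤ c) (h : B ≤ (1 + c / n) ^ n) :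
    B ≤ Real.exp c := by
  rcases Nat.eq_zero_or_pos n with rfl | hn
  · simpa using h.trans (by have := Real.exp_pos c; have := Real.one_le_exp h0; linarith)
  have h3 : Real.exp c = (Real.exp (c / n)) ^ n := by
    rw [← Real.exp_nat_mul]; congr 1; field_simp
  have h4 : (1 + c / n) ^ n ≤ (Real.exp (c / n)) ^ n := by
    apply pow_le_pow_left₀ (by positivity)
    have := Real.add_one_le_exp (c / n); linarith
  rw [h3]; linarith

lemma log100_le : Real.log 100 ≤ 4.7 := by
  rw [Real.log_le_iff_le_exp (by norm_num)]
  apply exp_lower _ _ 256 (by norm_num)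
  norm_num

lemma le_log100 : (4.59 : ℝ) ≤ Real.log 100 := by
  rw [Real.le_log_iff_exp_le (by norm_num)]
  apply exp_upper _ _ 1024 (by norm_num) (by norm_num) (by norm_num)
  rw [show (1024:ℕ) = 256 * 4 from rfl, pow_mul]
  norm_num

lemma le_log3 : (1.09 : ℝ) ≤ Real.log 3 := by
  rw [Real.le_log_iff_exp_le (by norm_num)]
  apply exp_upper _ _ 256 (by norm_num) (by norm_num) (by norm_num)
  norm_num

lemma exp_217 : Real.exp 2.17 < 100 / 9 := by
  have : Real.exp 2.17 ≤ 10 := by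
    apply exp_upper _ _ 64 (by norm_num) (by norm_num) (by norm_num)
    norm_num
  linarith

lemma le_loglog100 : (1.51 : ℝ) ≤ Real.log (Real.log 100) := by
  have h1 : (1.51 : ℝ) ≤ Real.log 4.59 := by
    rw [Real.le_log_iff_exp_le (by norm_num)]
    apply exp_upper _ _ 256 (by norm_num) (by norm_num) (by norm_num)
    norm_num
  exact h1.trans (Real.log_le_log (by norm_num) le_log100)

noncomputable def SS (n : ℕ) : ℝ := ∑ p ∈ (Finset.Iic n).filter Nat.Prime, (1:ℝ)/p
noncomputable def TT (n : ℕ) : ℝ := ∑ p ∈ (Finset.Iic n).filter Nat.Prime, Real.log p / p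

lemma Iic_eq_range (n : ℕ) : Finset.Iic n = Finset.range (n+1) := by
  ext k; simp [Nat.lt_succ_iff]

/-- Chebyshev theta bound from the primorial bound. -/
lemma theta_le (n : ℕ) : ∑ p ∈ (Finset.Iic n).filter Nat.Prime, Real.log p ≤ n * Real.log 4 := by
  have h1 : ∑ p ∈ (Finset.Iic n).filter Nat.Prime, Real.log p
      = Real.log ((primorial n : ℕ) : ℝ) := by
    rw [primorial]
    push_cast
    rw [Real.log_prod]
    · rw [Iic_eq_range]
    · intro p hp
      simp only [Finset.mem_filter, Finset.mem_range] at hp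
      exact_mod_cast hp.2.pos.ne'
  rw [h1]
  have h2 : ((primorial n : ℕ) : ℝ) ≤ (4:ℝ) ^ n := by
    exact_mod_cast primorial_le_4_pow n
  calc Real.log ((primorial n : ℕ) : ℝ) ≤ Real.log ((4:ℝ)^n) :=
        Real.log_le_log (by exact_mod_cast primorial_pos n) h2
  _ = n * Real.log 4 := Real.log_pow _ _

/-- Sum of logs bound (weak Stirling), by telescoping. -/
lemma sum_log_le : ∀ n : ℕ, 2 ≤ n →
    ∑ k ∈ Finset.Icc 1 n, Real.log k
      ≤ n * Real.log n - n + (2 - 2 * Real.log 2) + Real.log n := by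
  intro n hn
  induction n, hn using Nat.le_induction with
  | base =>
    have : Finset.Icc 1 2 = {1, 2} := by decide
    rw [this]
    norm_num [Real.log_one]
  | succ n hn ih =>
    rw [Finset.sum_Icc_succ_top (by omega)]
    have hn0 : (0:ℝ) < n := by positivity
    have hn1 : (0:ℝ) < (n:ℝ) + 1 := by positivity
    have hkey : 1 ≤ ((n:ℝ) + 1) * (Real.log (n+1) - Real.log n) := by
      have hx : (0:ℝ) < ((n:ℝ)+1)/n := by positivity
      have := Real.one_sub_inv_le_log_of_pos hx
      rw [Real.log_div (by positivity) (by positivity)] at this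
      have hinv : (((n:ℝ)+1)/n)⁻¹ = n/((n:ℝ)+1) := by rw [inv_div]
      rw [hinv] at this
      have h2 : 1 - n/((n:ℝ)+1) = 1/((n:ℝ)+1) := by field_simp; ring
      rw [h2] at this
      have := mul_le_mul_of_nonneg_left this hn1.le
      calc (1:ℝ) = ((n:ℝ)+1) * (1/((n:ℝ)+1)) := by field_simp
      _ ≤ ((n:ℝ)+1) * (Real.log (n+1) - Real.log n) := this
    have hlogmono : Real.log n ≤ Real.log (n+1) := Real.log_le_log hn0 (by linarith)
    push_cast
    push_cast at ih hkey
    nlinarith [ih]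

/-- Double counting: ∑_{p≤n} ⌊n/p⌋ log p ≤ ∑_{k≤n} log k. -/
lemma double_count (n : ℕ) :
    ∑ p ∈ (Finset.Iic n).filter Nat.Prime, ((n / p : ℕ) : ℝ) * Real.log p
      ≤ ∑ k ∈ Finset.Icc 1 n, Real.log k := by
  have key : ∀ p ∈ (Finset.Iic n).filter Nat.Prime,
      ((n / p : ℕ) : ℝ) * Real.log p
        = ∑ k ∈ Finset.Ioc 0 n, (if p ∣ k then Real.log p else 0) := by
    intro p hp
    rw [← Finset.sum_filter, Finset.sum_const, ← Nat.Ioc_filter_dvd_card_eq_div n p]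
    simp [nsmul_eq_mul]
  rw [Finset.sum_congr rfl key, Finset.sum_comm]
  have hIoc : Finset.Ioc 0 n = Finset.Icc 1 n := by
    ext k; simp [Nat.lt_iff_add_one_le]
  rw [hIoc]
  apply Finset.sum_le_sum
  intro k hk
  simp only [Finset.mem_Icc] at hk
  have hk0 : k ≠ 0 := by omega
  rw [← Finset.sum_filter]
  have hsub : ((Finset.Iic n).filter Nat.Prime).filter (· ∣ k) ⊆ k.primeFactors := by
    intro p hp
    simp only [Finset.mem_filter, Finset.mem_Iic] at hp
    exact Nat.mem_primeFactors.mpr ⟨hp.1.2, hp.2, hk0⟩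
  calc ∑ p ∈ ((Finset.Iic n).filter Nat.Prime).filter (· ∣ k), Real.log p
      ≤ ∑ p ∈ k.primeFactors, Real.log p := by
        apply Finset.sum_le_sum_of_subset_of_nonneg hsub
        intro p hp _
        have := (Nat.prime_of_mem_primeFactors hp).one_lt
        exact Real.log_nonneg (by exact_mod_cast this.le)
  _ = Real.log ((∏ p ∈ k.primeFactors, p : ℕ) : ℝ) := by
        push_cast
        rw [Real.log_prod]
        intro p hp
        exact_mod_cast (Nat.prime_of_mem_primeFactors hp).pos.ne'
  _ ≤ Real.log k := by
        apply Real.log_le_log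
        · exact_mod_cast Finset.prod_pos fun p hp => (Nat.prime_of_mem_primeFactors hp).pos
        · exact_mod_cast Nat.le_of_dvd (Nat.pos_of_ne_zero hk0) (Nat.prod_primeFactors_dvd k)

lemma log_le_lin {n : ℕ} (hn : 100 ≤ n) : Real.log n ≤ 3.7 + (n:ℝ)/100 := by
  have hn0 : (0:ℝ) < n := by positivity
  have h1 : Real.log n = Real.log 100 + Real.log ((n:ℝ)/100) := by
    rw [← Real.log_mul (by norm_num) (by positivity)]
    congr 1; field_simp
  have h2 : Real.log ((n:ℝ)/100) ≤ (n:ℝ)/100 - 1 :=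
    Real.log_le_sub_one_of_pos (by positivity)
  linarith [log100_le]

lemma TT_le {n : ℕ} (hn : 100 ≤ n) : TT n ≤ Real.log n + 0.45 := by
  have hn0 : (0:ℝ) < n := by positivity
  -- step 1: n * TT n ≤ ∑ (⌊n/p⌋ + 1) log p
  have h1 : (n:ℝ) * TT n ≤ ∑ p ∈ (Finset.Iic n).filter Nat.Prime,
      (((n / p : ℕ) : ℝ) * Real.log p + Real.log p) := by
    rw [TT, Finset.mul_sum]
    apply Finset.sum_le_sum
    intro p hp
    simp only [Finset.mem_filter, Finset.mem_Iic] at hp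
    have hp2 : (2:ℝ) ≤ p := by exact_mod_cast hp.2.two_le
    have hp0 : (0:ℝ) < p := by linarith
    have hlog : 0 ≤ Real.log p := Real.log_nonneg (by linarith)
    have hdiv : (n:ℝ)/p ≤ ((n / p : ℕ) : ℝ) + 1 := by
      rw [div_le_iff₀ hp0]
      have hthis : n < (n / p + 1) * p := by
        have hmod := Nat.div_add_mod n p
        have hlt : n % p < p := Nat.mod_lt _ hp.2.pos
        have hr : (n / p + 1) * p = p * (n / p) + p := by ring
        omega
      calc (n:ℝ) ≤ ((n / p + 1) * p : ℕ) := by exact_mod_cast hthis.le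
      _ = (((n / p : ℕ) : ℝ) + 1) * p := by push_cast; ring
    calc (n:ℝ) * (Real.log p / p) = ((n:ℝ)/p) * Real.log p := by ring
    _ ≤ (((n / p : ℕ) : ℝ) + 1) * Real.log p := mul_le_mul_of_nonneg_right hdiv hlog
    _ = ((n / p : ℕ) : ℝ) * Real.log p + Real.log p := by ring
  rw [Finset.sum_add_distrib] at h1
  have h2 := double_count n
  have h3 := theta_le n
  have h4 := sum_log_le n (by omega)
  have hlog4 : Real.log 4 = 2 * Real.log 2 := by
    rw [show (4:ℝ) = 2^2 by norm_num, Real.log_pow]; push_cast; ring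
  have hl2a := Real.log_two_lt_d9
  have hl2b := Real.log_two_gt_d9
  have h5 : Real.log n ≤ 3.7 + (n:ℝ)/100 := log_le_lin hn
  have hn100 : (100:ℝ) ≤ n := by exact_mod_cast hn
  have key : (n:ℝ) * TT n ≤ (n:ℝ) * (Real.log n + 0.45) := by
    rw [hlog4] at h3
    nlinarith
  exact le_of_mul_le_mul_left (by linarith [key]) hn0

lemma TT_nonneg (n : ℕ) : 0 ≤ TT n := by
  apply Finset.sum_nonneg
  intro p hp
  simp only [Finset.mem_filter] at hp
  have : (1:ℝ) ≤ p := by exact_mod_cast hp.2.one_lt.le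
  positivity

lemma le_logn {n : ℕ} (hn : 100 ≤ n) : (4.59:ℝ) ≤ Real.log n :=
  le_log100.trans (Real.log_le_log (by norm_num) (by exact_mod_cast hn))

lemma Iic_succ_filter (n : ℕ) : (Finset.Iic (n+1)).filter Nat.Prime =
    if (n+1).Prime then insert (n+1) ((Finset.Iic n).filter Nat.Prime)
    else (Finset.Iic n).filter Nat.Prime := by
  have h : Finset.Iic (n+1) = insert (n+1) (Finset.Iic n) := by
    ext k; simp [Nat.le_succ_iff]; omega
  rw [h, Finset.filter_insert]

lemma SS100_le : SS 100 ≤ 1.8029 := by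
  rw [SS, Iic_eq_range, Finset.sum_filter]
  simp (config := { decide := true }) only [Finset.sum_range_succ]
  norm_num

/-- The key invariant, by induction. -/
lemma invariant : ∀ n : ℕ, 100 ≤ n →
    SS n + 0.45 / Real.log n ≤ Real.log (Real.log n) + 0.42 + TT n / Real.log n := by
  intro n hn
  induction n, hn using Nat.le_induction with
  | base =>
    have h1 := le_log100
    have h2 := le_loglog100
    have h3 := SS100_le
    have hpos : (0:ℝ) < Real.log 100 := by linarith
    have h4 : 0.45 / Real.log 100 ≤ 0.45 / 4.59 :=
      div_le_div_of_nonneg_left (by norm_num) (by norm_num) h1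
    have h5 : 0 ≤ TT 100 / Real.log 100 := div_nonneg (TT_nonneg 100) hpos.le
    have hc : ((100:ℕ):ℝ) = (100:ℝ) := by norm_num
    rw [hc]
    linarith
  | succ n hn ih =>
    have hn0 : (0:ℝ) < n := by positivity
    have hL : (4.59:ℝ) ≤ Real.log n := le_logn hn
    have hLle : Real.log (n:ℝ) ≤ Real.log ((n:ℝ)+1) := Real.log_le_log (by positivity) (by linarith)
    have hLpos : (0:ℝ) < Real.log n := by linarith
    have hL'pos : (0:ℝ) < Real.log ((n:ℝ)+1) := by linarith
    set L := Real.log (n:ℝ) with hLdef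
    set L' := Real.log ((n:ℝ)+1) with hL'def
    have hcore : SS n + 0.45 / L' ≤ Real.log L' + 0.42 + TT n / L' := by
      set t := TT n - 0.45 with ht
      have hmain : Real.log L + t / L ≤ Real.log L' + t / L' := by
        rcases le_or_gt t 0 with hts | hts
        · have h1 : t / L ≤ t / L' := by
            rw [div_le_div_iff₀ hLpos hL'pos]
            nlinarith
          have h2 : Real.log L ≤ Real.log L' := Real.log_le_log hLpos hLle
          linarith
        · have htL : t ≤ L := by
            have := TT_le hn
            rw [ht]; linarith
          have hinv : L'⁻¹ ≤ L⁻¹ := by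
            apply inv_anti₀ hLpos hLle
          have hstep : t * (L⁻¹ - L'⁻¹) ≤ L * (L⁻¹ - L'⁻¹) :=
            mul_le_mul_of_nonneg_right htL (by linarith)
          have hLinv : L * L⁻¹ = 1 := mul_inv_cancel₀ (ne_of_gt hLpos)
          have hlog : 1 - L * L'⁻¹ ≤ Real.log L' - Real.log L := by
            have hx : (0:ℝ) < L'/L := by positivity
            have h := Real.one_sub_inv_le_log_of_pos hx
            rw [Real.log_div (ne_of_gt hL'pos) (ne_of_gt hLpos), inv_div] at h
            have : L / L' = L * L'⁻¹ := div_eq_mul_inv L L'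
            linarith [h, this ▸ h]
          have e1 : t / L = t * L⁻¹ := div_eq_mul_inv t L
          have e2 : t / L' = t * L'⁻¹ := div_eq_mul_inv t L'
          rw [e1, e2]
          nlinarith [hstep, hLinv, hlog]
      have hsplitL : t / L = TT n / L - 0.45 / L := by rw [ht, sub_div]
      have hsplitL' : t / L' = TT n / L' - 0.45 / L' := by rw [ht, sub_div]
      rw [hsplitL, hsplitL'] at hmain
      linarith
    have hcast : ((n+1 : ℕ) : ℝ) = (n:ℝ) + 1 := by push_cast; ring
    by_cases hp : (n+1).Prime
    · have hset := Iic_succ_filter n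
      rw [if_pos hp] at hset
      have hmem : (n+1) ∉ (Finset.Iic n).filter Nat.Prime := by simp
      have hSS : SS (n+1) = 1/((n:ℝ)+1) + SS n := by
        rw [SS, hset, Finset.sum_insert hmem, hcast]; rfl
      have hTT : TT (n+1) = L'/((n:ℝ)+1) + TT n := by
        rw [TT, hset, Finset.sum_insert hmem, hcast]; rfl
      rw [show Real.log ((n+1:ℕ):ℝ) = L' by rw [hcast]] at *
      rw [hSS, hTT]
      have hdiv : (L'/((n:ℝ)+1) + TT n)/L' = 1/((n:ℝ)+1) + TT n / L' := by
        rw [add_div]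
        congr 1
        field_simp
      rw [hdiv]
      linarith
    · have hset := Iic_succ_filter n
      rw [if_neg hp] at hset
      have hSS : SS (n+1) = SS n := by rw [SS, hset]; rfl
      have hTT : TT (n+1) = TT n := by rw [TT, hset]; rfl
      rw [show Real.log ((n+1:ℕ):ℝ) = L' by rw [hcast]] at *
      rw [hSS, hTT]
      linarith

/-- telescoping: exact value of ∑_{m=2}^n 1/(m²-1). -/
lemma telescope : ∀ n : ℕ, 1 ≤ n →
    ∑ m ∈ Finset.Icc 2 n, (1:ℝ)/((m:ℝ)^2 - 1)
      = 3/4 - 1/(2*(n:ℝ)) - 1/(2*((n:ℝ)+1)) := by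
  intro n hn
  induction n, hn using Nat.le_induction with
  | base => norm_num
  | succ n hn ih =>
    rw [Finset.sum_Icc_succ_top (by omega), ih]
    have hn0 : (0:ℝ) < n := by exact_mod_cast hn
    have h1 : ((n:ℝ)+1)^2 - 1 = n * (n + 2) := by ring
    push_cast
    rw [h1]
    have hn2 : (0:ℝ) < (n:ℝ) + 2 := by linarith
    have hn1 : (0:ℝ) < (n:ℝ) + 1 := by linarith
    field_simp
    ring

lemma sq_sum_le {n : ℕ} (hn : 1 ≤ n) :
    ∑ p ∈ (Finset.Iic n).filter Nat.Prime, (1:ℝ)/((p:ℝ)^2 - 1) ≤ 3/4 := by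
  have hsub : (Finset.Iic n).filter Nat.Prime ⊆ Finset.Icc 2 n := by
    intro p hp
    simp only [Finset.mem_filter, Finset.mem_Iic] at hp
    simp only [Finset.mem_Icc]
    exact ⟨hp.2.two_le, hp.1⟩
  have h1 : ∑ p ∈ (Finset.Iic n).filter Nat.Prime, (1:ℝ)/((p:ℝ)^2 - 1)
      ≤ ∑ m ∈ Finset.Icc 2 n, (1:ℝ)/((m:ℝ)^2 - 1) := by
    apply Finset.sum_le_sum_of_subset_of_nonneg hsub
    intro m hm _
    simp only [Finset.mem_Icc] at hm
    have : (2:ℝ) ≤ m := by exact_mod_cast hm.1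
    have : (0:ℝ) < (m:ℝ)^2 - 1 := by nlinarith
    positivity
  rw [telescope n hn] at h1
  have hn0 : (0:ℝ) < n := by exact_mod_cast hn
  have : (0:ℝ) < 1/(2*(n:ℝ)) := by positivity
  have : (0:ℝ) < 1/(2*((n:ℝ)+1)) := by positivity
  linarith

/-- per-prime bound: -log(1 - 1/p) ≤ 1/p + 1/(p²-1). -/
lemma neg_log_le {p : ℕ} (hp : p.Prime) :
    -Real.log (1 - 1/(p:ℝ)) ≤ 1/(p:ℝ) + 1/((p:ℝ)^2 - 1) := by
  have hp2 : (2:ℝ) ≤ p := by exact_mod_cast hp.two_le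
  have hp0 : (0:ℝ) < p := by linarith
  have h1 : (0:ℝ) < 1 - 1/(p:ℝ) := by
    rw [sub_pos]; rw [div_lt_one hp0]; linarith
  have hsq : (0:ℝ) < (p:ℝ)^2 - 1 := by nlinarith
  -- 1 - 1/p = (1 - 1/p²) * (1 + 1/p)⁻¹
  have hfact : 1 - 1/(p:ℝ) = (1 - 1/(p:ℝ)^2) / (1 + 1/(p:ℝ)) := by
    field_simp
    ring
  have h2 : (0:ℝ) < 1 - 1/(p:ℝ)^2 := by
    rw [sub_pos, div_lt_one (by positivity)]; nlinarith
  have h3 : (0:ℝ) < 1 + 1/(p:ℝ) := by positivity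
  rw [hfact, Real.log_div (ne_of_gt h2) (ne_of_gt h3)]
  have h4 : Real.log (1 + 1/(p:ℝ)) ≤ 1/(p:ℝ) := by
    have := Real.log_le_sub_one_of_pos h3; linarith
  have h5 : -Real.log (1 - 1/(p:ℝ)^2) ≤ 1/((p:ℝ)^2 - 1) := by
    rw [← Real.log_inv]
    have hinv : (1 - 1/(p:ℝ)^2)⁻¹ = 1 + 1/((p:ℝ)^2 - 1) := by
      field_simp
      ring
    rw [hinv]
    have := Real.log_le_sub_one_of_pos (show (0:ℝ) < 1 + 1/((p:ℝ)^2-1) by positivity)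
    linarith
  linarith

lemma P100_ge : (0.12:ℝ) ≤ ∏ p ∈ (Finset.Iic 100).filter Nat.Prime, (1 - (1:ℝ)/p) := by
  rw [Iic_eq_range, Finset.prod_filter]
  simp (config := { decide := true }) only [Finset.prod_range_succ]
  norm_num

lemma factor_pos {p : ℕ} (hp : p.Prime) : (0:ℝ) < 1 - 1/(p:ℝ) := by
  have hp2 : (2:ℝ) ≤ p := by exact_mod_cast hp.two_le
  have h : 1/(p:ℝ) ≤ 1/2 := by
    apply div_le_div_of_nonneg_left (by norm_num) (by norm_num) hp2
  linarith

lemma prod_ge {n : ℕ} (hn : 100 ≤ n) :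
    Real.exp (-2.17) / Real.log n
      ≤ ∏ p ∈ (Finset.Iic n).filter Nat.Prime, (1 - (1:ℝ)/p) := by
  have hL : (4.59:ℝ) ≤ Real.log n := le_logn hn
  have hLpos : (0:ℝ) < Real.log n := by linarith
  have hprod : ∏ p ∈ (Finset.Iic n).filter Nat.Prime, (1 - (1:ℝ)/p)
      = Real.exp (∑ p ∈ (Finset.Iic n).filter Nat.Prime, Real.log (1 - (1:ℝ)/p)) := by
    rw [Real.exp_sum]
    apply Finset.prod_congr rfl
    intro p hp
    simp only [Finset.mem_filter] at hp
    rw [Real.exp_log (factor_pos hp.2)]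
  have hsum : -(SS n + 3/4)
      ≤ ∑ p ∈ (Finset.Iic n).filter Nat.Prime, Real.log (1 - (1:ℝ)/p) := by
    have h1 : ∑ p ∈ (Finset.Iic n).filter Nat.Prime, Real.log (1 - (1:ℝ)/p)
        ≥ ∑ p ∈ (Finset.Iic n).filter Nat.Prime, (-(1/(p:ℝ)) - 1/((p:ℝ)^2 - 1)) := by
      apply Finset.sum_le_sum
      intro p hp
      simp only [Finset.mem_filter] at hp
      have := neg_log_le hp.2
      linarith
    have h2 : ∑ p ∈ (Finset.Iic n).filter Nat.Prime, (-(1/(p:ℝ)) - 1/((p:ℝ)^2 - 1))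
        = -SS n - ∑ p ∈ (Finset.Iic n).filter Nat.Prime, (1:ℝ)/((p:ℝ)^2 - 1) := by
      rw [Finset.sum_sub_distrib, Finset.sum_neg_distrib, SS]
    have h3 := sq_sum_le (show 1 ≤ n by omega)
    rw [h2] at h1
    linarith
  have hS : SS n ≤ Real.log (Real.log n) + 1.42 := by
    have h1 := invariant n hn
    have h2 : (TT n - 0.45) / Real.log n ≤ 1 := by
      rw [div_le_one hLpos]
      have := TT_le hn
      linarith
    have h3 : TT n / Real.log n - 0.45 / Real.log n = (TT n - 0.45) / Real.log n := by
      rw [sub_div]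
    have h4 : 0.45 / Real.log n ≥ 0 := by positivity
    linarith
  rw [hprod]
  have hstep : Real.exp (-(Real.log (Real.log n) + 2.17))
      ≤ Real.exp (∑ p ∈ (Finset.Iic n).filter Nat.Prime, Real.log (1 - (1:ℝ)/p)) := by
    apply Real.exp_le_exp.mpr
    linarith
  have heq : Real.exp (-(Real.log (Real.log n) + 2.17))
      = Real.exp (-2.17) / Real.log n := by
    rw [show -(Real.log (Real.log n) + 2.17) = -2.17 + -(Real.log (Real.log n)) by ring,
      Real.exp_add, Real.exp_neg (Real.log (Real.log n)), Real.exp_log hLpos, div_eq_mul_inv]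
  rw [heq] at hstep
  exact hstep

theorem mertens_aux :
    ∀ x : ℝ, 3 ≤ x →
      (∏ p ∈ (Finset.Iic ⌊x⌋₊).filter Nat.Prime, (1 - (1 : ℝ) / p)) > 0.09 / Real.log x := by
  intro x hx
  have hx0 : (0:ℝ) < x := by linarith
  set n := ⌊x⌋₊ with hn
  have hnx : (n:ℝ) ≤ x := Nat.floor_le hx0.le
  have hxlog3 : (1.09:ℝ) ≤ Real.log x := le_log3.trans (Real.log_le_log (by norm_num) hx)
  have hlogx_pos : (0:ℝ) < Real.log x := by linarith
  rcases le_or_gt 100 n with h | h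
  · have hlogn : (4.59:ℝ) ≤ Real.log n := le_logn h
    have hlognpos : (0:ℝ) < Real.log n := by linarith
    have hn0 : (0:ℝ) < n := by positivity
    have h1 : (0.09:ℝ)/Real.log x ≤ 0.09/Real.log n :=
      div_le_div_of_nonneg_left (by norm_num) hlognpos (Real.log_le_log hn0 hnx)
    have h2 : (0.09:ℝ) < Real.exp (-2.17) := by
      rw [Real.exp_neg]
      have hp := Real.exp_pos (2.17:ℝ)
      have hc := mul_inv_cancel₀ (ne_of_gt hp)
      nlinarith [exp_217]
    have h3 : (0.09:ℝ)/Real.log n < Real.exp (-2.17)/Real.log n :=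
      (div_lt_div_iff_of_pos_right hlognpos).mpr h2
    calc (0.09:ℝ)/Real.log x ≤ 0.09/Real.log n := h1
    _ < Real.exp (-2.17)/Real.log n := h3
    _ ≤ _ := prod_ge h
  · have hsub : (Finset.Iic n).filter Nat.Prime ⊆ (Finset.Iic 100).filter Nat.Prime :=
      Finset.filter_subset_filter _ (Finset.Iic_subset_Iic.mpr (by omega))
    have hmono : ∏ p ∈ (Finset.Iic 100).filter Nat.Prime, (1 - (1:ℝ)/p)
        ≤ ∏ p ∈ (Finset.Iic n).filter Nat.Prime, (1 - (1:ℝ)/p) := by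
      rw [← Finset.prod_sdiff hsub]
      have ha : ∏ p ∈ (Finset.Iic 100).filter Nat.Prime \ (Finset.Iic n).filter Nat.Prime,
          (1 - (1:ℝ)/p) ≤ 1 := by
        apply Finset.prod_le_one
        · intro p hp
          have hp' := Finset.mem_sdiff.mp hp
          simp only [Finset.mem_filter] at hp'
          exact (factor_pos hp'.1.2).le
        · intro p hp
          have hp' := Finset.mem_sdiff.mp hp
          simp only [Finset.mem_filter] at hp'
          have : (0:ℝ) < p := by exact_mod_cast hp'.1.2.pos
          have : 0 ≤ 1/(p:ℝ) := by positivity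
          linarith
      have hb : (0:ℝ) ≤ ∏ p ∈ (Finset.Iic n).filter Nat.Prime, (1 - (1:ℝ)/p) := by
        apply Finset.prod_nonneg
        intro p hp
        simp only [Finset.mem_filter] at hp
        exact (factor_pos hp.2).le
      nlinarith
    have h1 : (0.09:ℝ)/Real.log x ≤ 0.09/1.09 :=
      div_le_div_of_nonneg_left (by norm_num) (by norm_num) hxlog3
    calc (0.09:ℝ)/Real.log x ≤ 0.09/1.09 := h1
    _ < 0.12 := by norm_num
    _ ≤ ∏ p ∈ (Finset.Iic 100).filter Nat.Prime, (1 - (1:ℝ)/p) := P100_ge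
    _ ≤ _ := hmono

end M009

/-- For every real `x ≥ 3`, `∏_{p ≤ x} (1 - 1/p) > 0.09 / log x`. -/
theorem mertens_lower_bound_009 :
    ∀ x : ℝ, 3 ≤ x →
      (∏ p ∈ (Finset.Iic ⌊x⌋₊).filter Nat.Prime, (1 - (1 : ℝ) / p)) > 0.09 / Real.log x :=
  M009.mertens_aux
end

section
/- If n is a composite natural number (n > 1 and n not prime) such that φ(n) divides n − 1, then n is odd and squarefree. -/
/-- If `n` is composite and `φ(n) ∣ n - 1`, then `n` is odd and squarefree. -/
theorem lehmer_odd_squarefree (n : ℕ) (hn : 1 < n) (hnp : ¬ n.Prime)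
    (h : n.totient ∣ n - 1) : Odd n ∧ Squarefree n := by
  have hn2 : 2 < n := by
    rcases Nat.lt_or_ge n 3 with h3 | h3
    · interval_cases n
      · exact absurd Nat.prime_two hnp
    · omega
  have heven : Even n.totient := Nat.totient_even hn2
  have h2 : 2 ∣ n - 1 := dvd_trans heven.two_dvd h
  have hodd : Odd n := by
    rcases Nat.even_or_odd n with he | ho
    · exfalso
      obtain ⟨k, hk⟩ := he
      omega
    · exact ho
  refine ⟨hodd, ?_⟩
  rw [Nat.squarefree_iff_prime_squarefree]
  intro p hp hpp
  obtain ⟨m, hm⟩ := hpp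
  have hpm : p ∣ p * m := dvd_mul_right p m
  have hnm : n = p * (p * m) := by rw [hm]; ring
  have htot : n.totient = p * (p * m).totient := by
    rw [hnm]; exact Nat.totient_mul_of_prime_of_dvd hp hpm
  have hpdvd : p ∣ n.totient := ⟨_, htot⟩
  have hpn1 : p ∣ n - 1 := hpdvd.trans h
  have hpn : p ∣ n := ⟨p * m, hnm⟩
  have h1 : p ∣ n - (n - 1) := Nat.dvd_sub hpn hpn1
  have hsub : n - (n - 1) = 1 := by omega
  rw [hsub] at h1
  exact hp.one_lt.ne' (Nat.eq_one_of_dvd_one h1)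
end

section
/- For every natural number M ≥ 3 there exists N such that for every finite set S of distinct odd primes with 3 ≤ |S| ≤ M whose elements are all at least N, and for every positive integer m, one has both ∏_{p ∈ S} p ≠ m·∏_{p ∈ S}(p − 1) + 1 and ∏_{p ∈ S} p + 1 ≠ m·∏_{p ∈ S}(p − 1). -/
open Finset

private lemma step_ineq {A a : ℕ} (hA : 1 ≤ A) (h : A ≤ a) : (A - 1) * a ≤ A * (a - 1) := by
  have h1 : (A - 1) * a = A * a - a := by rw [Nat.sub_mul, Nat.one_mul]
  have h2 : A * (a - 1) = A * a - A := by rw [Nat.mul_sub, Nat.mul_one]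
  have h3 : a ≤ A * a := Nat.le_mul_of_pos_left a hA
  omega

private lemma aux_prod (N : ℕ) : ∀ S : Finset ℕ, (∀ p ∈ S, N ≤ p) →
    (N - S.card) * ∏ p ∈ S, p ≤ N * ∏ p ∈ S, (p - 1) := by
  intro S
  induction S using Finset.induction_on with
  | empty => intro _; simp
  | @insert a s ha ih =>
    intro h
    rw [Finset.prod_insert ha, Finset.prod_insert ha, Finset.card_insert_of_notMem ha]
    have hIH := ih (fun p hp => h p (Finset.mem_insert_of_mem hp))
    have haN : N ≤ a := h a (Finset.mem_insert_self a s)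
    by_cases hc : N ≤ s.card + 1
    · have hz : N - (s.card + 1) = 0 := by omega
      simp [hz]
    · have hA : 1 ≤ N - s.card := by omega
      have h1 : (N - (s.card + 1)) * a ≤ (N - s.card) * (a - 1) := by
        have hst := step_ineq hA (le_trans (Nat.sub_le N s.card) haN)
        have e : N - (s.card + 1) = (N - s.card) - 1 := by omega
        rw [e]; exact hst
      calc (N - (s.card + 1)) * (a * ∏ p ∈ s, p)
          = ((N - (s.card + 1)) * a) * ∏ p ∈ s, p := by ring
        _ ≤ ((N - s.card) * (a - 1)) * ∏ p ∈ s, p := Nat.mul_le_mul_right _ h1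
        _ = (a - 1) * ((N - s.card) * ∏ p ∈ s, p) := by ring
        _ ≤ (a - 1) * (N * ∏ p ∈ s, (p - 1)) := Nat.mul_le_mul_left _ hIH
        _ = N * ((a - 1) * ∏ p ∈ s, (p - 1)) := by ring

/-- Theorem 3 of the paper: for each bound `M ≥ 3` there is `N` such that for every
finite set `S` of at least three distinct odd primes with `|S| ≤ M`, all at least `N`,
the equations `∏ p - m·∏(p-1) = 1` and `∏ p - m·∏(p-1) = -1` have no solution in
positive integers `m`. -/
theorem lehmer_no_solution_large_primes (M : ℕ) (hM : 3 ≤ M) :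
    ∃ N : ℕ, ∀ S : Finset ℕ, (∀ p ∈ S, p.Prime ∧ 3 ≤ p) →
      3 ≤ S.card → S.card ≤ M → (∀ p ∈ S, N ≤ p) →
      ∀ m : ℕ, 0 < m →
        (∏ p ∈ S, p) ≠ m * (∏ p ∈ S, (p - 1)) + 1 ∧
        (∏ p ∈ S, p) + 1 ≠ m * (∏ p ∈ S, (p - 1)) := by
  refine ⟨4 * M, ?_⟩
  intro S _hprime hc3 hcM hbig m hm
  have hM12 : 12 ≤ 4 * M := by omega
  have hP12 : ∀ p ∈ S, 12 ≤ p := fun p hp => le_trans hM12 (hbig p hp)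
  -- pick an element a of S
  have hne : S.Nonempty := Finset.card_pos.mp (by omega)
  obtain ⟨a, haS⟩ := hne
  have hP : ∏ p ∈ S, p = a * ∏ p ∈ S.erase a, p := (Finset.mul_prod_erase S _ haS).symm
  have hQ : ∏ p ∈ S, (p - 1) = (a - 1) * ∏ p ∈ S.erase a, (p - 1) :=
    (Finset.mul_prod_erase S (fun p => p - 1) haS).symm
  have hQ'le : ∏ p ∈ S.erase a, (p - 1) ≤ ∏ p ∈ S.erase a, p :=
    Finset.prod_le_prod (fun i _ => Nat.zero_le _) (fun i _ => Nat.sub_le _ _)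
  -- the erased product is at least 12
  have herasene : (S.erase a).Nonempty := by
    rw [← Finset.card_pos, Finset.card_erase_of_mem haS]; omega
  obtain ⟨b, hb⟩ := herasene
  have hb12 : 12 ≤ b := hP12 b (Finset.mem_of_mem_erase hb)
  have hP'12 : 12 ≤ ∏ p ∈ S.erase a, p := by
    have hble : b ≤ ∏ p ∈ S.erase a, p := by
      refine Nat.le_of_dvd ?_ (Finset.dvd_prod_of_mem _ hb)
      refine Finset.prod_pos (fun i hi => ?_)
      have := hP12 i (Finset.mem_of_mem_erase hi); omega
    omega
  have ha12 : 12 ≤ a := hP12 a haS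
  -- the gap: ∏(p-1) + 12 ≤ ∏ p
  have hgap : (∏ p ∈ S, (p - 1)) + 12 ≤ ∏ p ∈ S, p := by
    rw [hP, hQ]
    have h1 : (a - 1) * ∏ p ∈ S.erase a, (p - 1) ≤ (a - 1) * ∏ p ∈ S.erase a, p :=
      Nat.mul_le_mul_left _ hQ'le
    have h2 : (a - 1) * (∏ p ∈ S.erase a, p) + ∏ p ∈ S.erase a, p = a * ∏ p ∈ S.erase a, p := by
      have e : a - 1 + 1 = a := by omega
      rw [← e, Nat.add_mul, Nat.one_mul, e]
    omega
  -- the main inequality: 3 ∏ p ≤ 4 ∏ (p-1)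
  have hmain : 3 * ∏ p ∈ S, p ≤ 4 * ∏ p ∈ S, (p - 1) := by
    have h0 := aux_prod (4 * M) S hbig
    have h1 : 3 * M ≤ 4 * M - S.card := by omega
    have h2 : M * (3 * ∏ p ∈ S, p) ≤ M * (4 * ∏ p ∈ S, (p - 1)) := by
      calc M * (3 * ∏ p ∈ S, p) = (3 * M) * ∏ p ∈ S, p := by ring
        _ ≤ (4 * M - S.card) * ∏ p ∈ S, p := Nat.mul_le_mul_right _ h1
        _ ≤ (4 * M) * ∏ p ∈ S, (p - 1) := h0
        _ = M * (4 * ∏ p ∈ S, (p - 1)) := by ring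
    exact Nat.le_of_mul_le_mul_left h2 (by omega)
  have hPge : 12 ≤ ∏ p ∈ S, p := by omega
  constructor
  · intro heq
    rcases Nat.lt_or_ge m 2 with h2 | h2
    · have hm1 : m = 1 := by omega
      rw [hm1, Nat.one_mul] at heq
      omega
    · have h1 : 2 * ∏ p ∈ S, (p - 1) ≤ m * ∏ p ∈ S, (p - 1) :=
        Nat.mul_le_mul_right _ h2
      have h3 : 2 * (∏ p ∈ S, (p - 1)) + 1 ≤ ∏ p ∈ S, p := by
        rw [heq]; omega
      omega
  · intro heq
    rcases Nat.lt_or_ge m 2 with h2 | h2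
    · have hm1 : m = 1 := by omega
      rw [hm1, Nat.one_mul] at heq
      omega
    · have h1 : 2 * ∏ p ∈ S, (p - 1) ≤ m * ∏ p ∈ S, (p - 1) :=
        Nat.mul_le_mul_right _ h2
      have h3 : 2 * ∏ p ∈ S, (p - 1) ≤ (∏ p ∈ S, p) + 1 := by
        rw [heq]; exact h1
      omega
end
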